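/- Let (A, λ) be a finitely additive measure structure on Ω, S a topological space and X : Ω → ℝ with X ≥ 0. Suppose X is λ-tight (for every ε > 0 there is a compact subset K ⊆ ℝ with λ*(X ∉ K) < ε) and the set {t > 0 : {X > t} ∈ A(λ)} is dense in (0, ∞), where A(λ) = {E ⊆ Ω : λ*(E) = λ_*(E) < ∞}. Then X is λ-measurable. -/

import Mathlib

open scoped ENNReal
open MeasureTheory Filter

namespace FA

variable {Ω : Type*}

/-- Outer measure induced by a finitely additive set function on a ring. -/
noncomputable def outer (𝒜 : Set (Set Ω)) (l : Set Ω → ℝ) (E : Set Ω) : ℝ≥0∞ :=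
  ⨅ (A : Set Ω) (_ : A ∈ 𝒜) (_ : E ⊆ A), ENNReal.ofReal (l A)

/-- Inner measure induced by a finitely additive set function on a ring. -/
noncomputable def inner (𝒜 : Set (Set Ω)) (l : Set Ω → ℝ) (E : Set Ω) : ℝ≥0∞ :=
  ⨆ (B : Set Ω) (_ : B ∈ 𝒜) (_ : B ⊆ E), ENNReal.ofReal (l B)

/-- `f` is an `𝒜`-simple function. -/
def IsSimple (𝒜 : Set (Set Ω)) (f : Ω → ℝ) : Prop :=
  ∃ (s : Finset (Set Ω)) (c : Set Ω → ℝ), (∀ A ∈ s, A ∈ 𝒜) ∧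
    ∀ ω, f ω = ∑ A ∈ s, c A * (A.indicator (fun _ => (1 : ℝ)) ω)

/-- `I` is the elementary integral of the `𝒜`-simple function `f` with respect to `l`. -/
def SimpleIntegralEq (𝒜 : Set (Set Ω)) (l : Set Ω → ℝ) (f : Ω → ℝ) (I : ℝ) : Prop :=
  ∃ (s : Finset (Set Ω)) (c : Set Ω → ℝ), (∀ A ∈ s, A ∈ 𝒜) ∧
    (∀ ω, f ω = ∑ A ∈ s, c A * (A.indicator (fun _ => (1 : ℝ)) ω)) ∧
    I = ∑ A ∈ s, c A * l A

/-- `f n` converges to `g` in `l`-measure. -/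
def ConvInMeasure (𝒜 : Set (Set Ω)) (l : Set Ω → ℝ) (f : ℕ → Ω → ℝ) (g : Ω → ℝ) : Prop :=
  ∀ c : ℝ, 0 < c →
    Tendsto (fun n => outer 𝒜 l {ω | c < |f n ω - g ω|}) atTop (nhds 0)

/-- The sequence `f` is Cauchy in the `L¹(l)` seminorm. -/
def CauchyL1 (𝒜 : Set (Set Ω)) (l : Set Ω → ℝ) (f : ℕ → Ω → ℝ) : Prop :=
  ∀ ε : ℝ, 0 < ε → ∃ N : ℕ, ∀ m ≥ N, ∀ n ≥ N,
    ∃ I : ℝ, SimpleIntegralEq 𝒜 l (fun ω => |f m ω - f n ω|) I ∧ I < ε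

/-- `f` is integrable in the finitely additive (Dunford–Schwartz) sense with integral `I`. -/
def HasIntegral (𝒜 : Set (Set Ω)) (l : Set Ω → ℝ) (f : Ω → ℝ) (I : ℝ) : Prop :=
  ∃ (g : ℕ → Ω → ℝ) (J : ℕ → ℝ), (∀ n, IsSimple 𝒜 (g n)) ∧
    ConvInMeasure 𝒜 l g f ∧ CauchyL1 𝒜 l g ∧
    (∀ n, SimpleIntegralEq 𝒜 l (g n) (J n)) ∧ Tendsto J atTop (nhds I)

/-- `f ∈ L¹(l)`. -/
def MemL1 (𝒜 : Set (Set Ω)) (l : Set Ω → ℝ) (f : Ω → ℝ) : Prop :=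
  ∃ I : ℝ, HasIntegral 𝒜 l f I

/-- `f` is `l`-measurable: an `l`-limit in measure of `𝒜`-simple functions. -/
def FAMeasurable (𝒜 : Set (Set Ω)) (l : Set Ω → ℝ) (f : Ω → ℝ) : Prop :=
  ∃ g : ℕ → Ω → ℝ, (∀ n, IsSimple 𝒜 (g n)) ∧ ConvInMeasure 𝒜 l g f

/-- `(𝒜, l)` is a finitely additive measure structure on `Ω`. -/
def FAMeasure (𝒜 : Set (Set Ω)) (l : Set Ω → ℝ) : Prop :=
  MeasureTheory.IsSetRing 𝒜 ∧ (∀ A ∈ 𝒜, 0 ≤ l A) ∧ l ∅ = 0 ∧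
    ∀ A ∈ 𝒜, ∀ B ∈ 𝒜, Disjoint A B → l (A ∪ B) = l A + l B

/-- The ring `𝒜(l)` of sets whose inner and outer measures agree and are finite. -/
def AgreeRing (𝒜 : Set (Set Ω)) (l : Set Ω → ℝ) : Set (Set Ω) :=
  {E : Set Ω | outer 𝒜 l E = inner 𝒜 l E ∧ outer 𝒜 l E < ⊤}

end FA

open FA MeasureTheory

open scoped NNReal

namespace FA

variable {Ω : Type*} {𝒜 : Set (Set Ω)} {l : Set Ω → ℝ}

lemma l_diff (hl : FAMeasure 𝒜 l) {A B : Set Ω} (hA : A ∈ 𝒜) (hB : B ∈ 𝒜)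
    (hBA : B ⊆ A) : l (A \ B) = l A - l B := by
  have h := hl.2.2.2 B hB (A \ B) (hl.1.sdiff_mem hA hB) disjoint_sdiff_self_right
  rw [Set.union_diff_cancel hBA] at h
  linarith

lemma l_mono (hl : FAMeasure 𝒜 l) {A B : Set Ω} (hA : A ∈ 𝒜) (hB : B ∈ 𝒜)
    (hBA : B ⊆ A) : l B ≤ l A := by
  have h1 := l_diff hl hA hB hBA
  have h2 := hl.2.1 (A \ B) (hl.1.sdiff_mem hA hB)
  linarith

lemma l_union_le (hl : FAMeasure 𝒜 l) {A B : Set Ω} (hA : A ∈ 𝒜) (hB : B ∈ 𝒜) :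
    l (A ∪ B) ≤ l A + l B := by
  have h : A ∪ B = A ∪ (B \ A) := by rw [Set.union_diff_self]
  rw [h, hl.2.2.2 A hA (B \ A) (hl.1.sdiff_mem hB hA) disjoint_sdiff_self_right]
  have := l_mono hl hB (hl.1.sdiff_mem hB hA) Set.diff_subset
  linarith

lemma outer_le {A : Set Ω} (hA : A ∈ 𝒜) {E : Set Ω} (hE : E ⊆ A) :
    outer 𝒜 l E ≤ ENNReal.ofReal (l A) := by
  refine iInf₂_le_of_le A hA ?_
  exact iInf_le (fun _ => ENNReal.ofReal (l A)) hE

lemma outer_mono {E F : Set Ω} (h : E ⊆ F) : outer 𝒜 l E ≤ outer 𝒜 l F := by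
  simp only [outer, le_iInf_iff]
  intro A hA hFA
  exact outer_le hA (h.trans hFA)

lemma exists_outer_lt {E : Set Ω} {x : ℝ≥0∞} (h : outer 𝒜 l E < x) :
    ∃ A ∈ 𝒜, E ⊆ A ∧ ENNReal.ofReal (l A) < x := by
  simp only [outer, iInf_lt_iff] at h
  obtain ⟨A, hA, hEA, hlt⟩ := h
  exact ⟨A, hA, hEA, hlt⟩

lemma exists_inner_gt {E : Set Ω} {x : ℝ≥0∞} (h : x < inner 𝒜 l E) :
    ∃ B ∈ 𝒜, B ⊆ E ∧ x < ENNReal.ofReal (l B) := by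
  simp only [inner, lt_iSup_iff] at h
  obtain ⟨B, hB, hBE, hlt⟩ := h
  exact ⟨B, hB, hBE, hlt⟩

lemma outer_union_le (hl : FAMeasure 𝒜 l) (E F : Set Ω) :
    outer 𝒜 l (E ∪ F) ≤ outer 𝒜 l E + outer 𝒜 l F := by
  rcases eq_top_or_lt_top (outer 𝒜 l E) with hE | hE
  · simp [hE]
  rcases eq_top_or_lt_top (outer 𝒜 l F) with hF | hF
  · simp [hF]
  refine ENNReal.le_of_forall_pos_le_add fun ε hε _ => ?_
  have hε2 : ((ε : ℝ≥0∞) / 2) ≠ 0 := by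
    simp [ENNReal.div_eq_zero_iff]
    exact_mod_cast hε.ne'
  obtain ⟨A, hA, hEA, hlA⟩ := exists_outer_lt (ENNReal.lt_add_right hE.ne hε2)
  obtain ⟨B, hB, hFB, hlB⟩ := exists_outer_lt (ENNReal.lt_add_right hF.ne hε2)
  calc outer 𝒜 l (E ∪ F) ≤ ENNReal.ofReal (l (A ∪ B)) :=
        outer_le (hl.1.union_mem hA hB) (Set.union_subset_union hEA hFB)
    _ ≤ ENNReal.ofReal (l A + l B) :=
        ENNReal.ofReal_le_ofReal (l_union_le hl hA hB)
    _ ≤ ENNReal.ofReal (l A) + ENNReal.ofReal (l B) := ENNReal.ofReal_add_le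
    _ ≤ (outer 𝒜 l E + ε / 2) + (outer 𝒜 l F + ε / 2) := add_le_add hlA.le hlB.le
    _ = outer 𝒜 l E + outer 𝒜 l F + ε := by
        rw [add_assoc, add_comm ((ε:ℝ≥0∞)/2), add_assoc, ENNReal.add_halves, ← add_assoc]

lemma outer_empty (hl : FAMeasure 𝒜 l) : outer 𝒜 l (∅ : Set Ω) = 0 := by
  refine le_antisymm ?_ (zero_le)
  have := outer_le (𝒜 := 𝒜) (l := l) hl.1.empty_mem (subset_refl ∅)
  simpa [hl.2.2.1] using this

lemma outer_biUnion_le (hl : FAMeasure 𝒜 l) {ι : Type*} (s : Finset ι) (f : ι → Set Ω) :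
    outer 𝒜 l (⋃ i ∈ s, f i) ≤ ∑ i ∈ s, outer 𝒜 l (f i) := by
  classical
  induction s using Finset.induction_on with
  | empty => simp [outer_empty hl]
  | @insert a t ha ih =>
    rw [Finset.set_biUnion_insert, Finset.sum_insert ha]
    exact (outer_union_le hl _ _).trans (add_le_add le_rfl ih)

lemma approx (hl : FAMeasure 𝒜 l) {E : Set Ω} (hE : E ∈ AgreeRing 𝒜 l)
    {ε : ℝ≥0∞} (hε : 0 < ε) :
    ∃ B ∈ 𝒜, B ⊆ E ∧ outer 𝒜 l (E \ B) < ε := by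
  rcases lt_or_ge (outer 𝒜 l E) ε with h | h
  · exact ⟨∅, hl.1.empty_mem, Set.empty_subset E,
      lt_of_le_of_lt (outer_mono (by simp)) h⟩
  set r := outer 𝒜 l E with hr
  have hrtop : r ≠ ⊤ := hE.2.ne
  have hεtop : ε ≠ ⊤ := (lt_of_le_of_lt h hE.2).ne
  have hε2 : (ε / 2) ≠ 0 := by simp [ENNReal.div_eq_zero_iff, hε.ne']
  obtain ⟨A, hA, hEA, hlA⟩ := exists_outer_lt (ENNReal.lt_add_right hrtop hε2)
  have hr0 : r ≠ 0 := by intro h0; rw [h0] at h; exact hε.ne' (le_antisymm h (zero_le))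
  have hrin : r - ε / 2 < inner 𝒜 l E := hE.1 ▸ ENNReal.sub_lt_self hrtop hr0 hε2
  obtain ⟨B, hB, hBE, hlB⟩ := exists_inner_gt hrin
  refine ⟨B, hB, hBE, ?_⟩
  have hBA : B ⊆ A := hBE.trans hEA
  have key : outer 𝒜 l (E \ B) ≤ ENNReal.ofReal (l (A \ B)) :=
    outer_le (hl.1.sdiff_mem hA hB) (Set.diff_subset_diff_left hEA)
  rw [l_diff hl hA hB hBA] at key
  have hsub : ENNReal.ofReal (l A - l B) = ENNReal.ofReal (l A) - ENNReal.ofReal (l B) :=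
    ENNReal.ofReal_sub _ (hl.2.1 B hB)
  rw [hsub] at key
  refine lt_of_le_of_lt key ?_
  rcases le_total (ENNReal.ofReal (l A)) (ENNReal.ofReal (l B)) with hab | hab
  · rw [tsub_eq_zero_of_le hab]; exact hε
  · have h1 : r ≤ ENNReal.ofReal (l B) + ε / 2 := by
      by_contra hcon
      push_neg at hcon
      have : ENNReal.ofReal (l B) ≤ r - ε / 2 :=
        ENNReal.le_sub_of_add_le_right (by simp [ENNReal.div_eq_top, hεtop]) hcon.le
      exact absurd hlB (not_lt.mpr this)
    have h2 : ENNReal.ofReal (l A) < ENNReal.ofReal (l B) + ε := by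
      calc ENNReal.ofReal (l A) < r + ε / 2 := hlA
        _ ≤ ENNReal.ofReal (l B) + ε / 2 + ε / 2 := add_le_add h1 le_rfl
        _ = ENNReal.ofReal (l B) + ε := by rw [add_assoc, ENNReal.add_halves]
    exact ENNReal.sub_lt_iff_lt_right ENNReal.ofReal_ne_top hab |>.mpr
      (by rwa [add_comm] at h2)


lemma isSimple_zero : IsSimple 𝒜 (fun _ : Ω => (0:ℝ)) :=
  ⟨∅, fun _ => 0, by simp, by simp⟩

lemma isSimple_add {f g : Ω → ℝ} (hf : IsSimple 𝒜 f) (hg : IsSimple 𝒜 g) :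
    IsSimple 𝒜 (fun ω => f ω + g ω) := by
  classical
  obtain ⟨s, cs, hs, hfs⟩ := hf
  obtain ⟨t, ct, ht, hgt⟩ := hg
  have key : ∀ (u : Finset (Set Ω)) (c : Set Ω → ℝ) (ω : Ω), u ⊆ s ∪ t →
      ∑ A ∈ s ∪ t, (if A ∈ u then c A else 0) * (A.indicator (fun _ => (1:ℝ)) ω)
        = ∑ A ∈ u, c A * (A.indicator (fun _ => (1:ℝ)) ω) := by
    intro u c ω huv
    rw [← Finset.sum_subset huv (fun x _ hxu => by simp [hxu])]
    exact Finset.sum_congr rfl fun x hx => by simp [hx]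
  refine ⟨s ∪ t, fun A => (if A ∈ s then cs A else 0) + (if A ∈ t then ct A else 0),
    fun A hA => by rcases Finset.mem_union.mp hA with h | h; exacts [hs A h, ht A h],
    fun ω => ?_⟩
  simp only [add_mul, Finset.sum_add_distrib]
  rw [key s cs ω Finset.subset_union_left, key t ct ω Finset.subset_union_right,
    hfs, hgt]

lemma isSimple_indicator {B : Set Ω} (hB : B ∈ 𝒜) (c : ℝ) :
    IsSimple 𝒜 (fun ω => c * B.indicator (fun _ => (1:ℝ)) ω) := by
  refine ⟨{B}, fun _ => c, by simpa using hB, fun ω => by simp⟩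

lemma isSimple_sum {ι : Type*} (s : Finset ι) (c : ι → ℝ) (B : ι → Set Ω)
    (hB : ∀ i ∈ s, B i ∈ 𝒜) :
    IsSimple 𝒜 (fun ω => ∑ i ∈ s, c i * ((B i).indicator (fun _ => (1:ℝ)) ω)) := by
  classical
  induction s using Finset.induction_on with
  | empty => simpa using isSimple_zero
  | @insert a t ha ih =>
    have h1 := ih (fun i hi => hB i (Finset.mem_insert_of_mem hi))
    have h2 := isSimple_indicator (𝒜 := 𝒜) (hB a (Finset.mem_insert_self a t)) (c a)
    have := isSimple_add h2 h1
    convert this using 2 with ω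
    rw [Finset.sum_insert ha]


variable {𝒜 : Set (Set Ω)} {l : Set Ω → ℝ} in
lemma step (hl : FAMeasure 𝒜 l) (X : Ω → ℝ) (hX : ∀ ω, 0 ≤ X ω)
    (htight : ∀ ε : ℝ≥0∞, 0 < ε → ∃ K : Set ℝ, IsCompact K ∧
      outer 𝒜 l {ω | X ω ∉ K} < ε)
    (hdense : ∀ a b : ℝ, 0 < a → a < b →
      ∃ t : ℝ, a < t ∧ t < b ∧ {ω | t < X ω} ∈ AgreeRing 𝒜 l)
    {δ : ℝ} (hδ : 0 < δ) :
    ∃ f : Ω → ℝ, IsSimple 𝒜 f ∧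
      outer 𝒜 l {ω | δ ≤ |f ω - X ω|} ≤ ENNReal.ofReal δ := by
  classical
  set ε := ENNReal.ofReal δ with hεdef
  have hε : 0 < ε := ENNReal.ofReal_pos.mpr hδ
  obtain ⟨K, hK, hKout⟩ := htight (ε / 2) (ENNReal.half_pos hε.ne')
  obtain ⟨M, hM⟩ := hK.isBounded.exists_norm_le
  set M' : ℝ := |M| + 1 with hM'def
  have hM' : 0 < M' := by positivity
  have hnotK : ∀ ω, M' < X ω → X ω ∉ K := by
    intro ω h hmem
    have h1 := hM _ hmem
    rw [Real.norm_eq_abs] at h1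
    have : X ω ≤ |M| := le_trans (le_abs_self _) (h1.trans (le_abs_self M))
    linarith
  set m : ℕ := ⌈2 * M' / δ⌉₊ with hmdef
  have hm1 : 1 ≤ m := Nat.ceil_pos.mpr (by positivity)
  have hmge : 2 * M' / δ ≤ (m : ℝ) := Nat.le_ceil _
  have hmM : M' ≤ (m : ℝ) * (δ / 2) := by
    rw [div_le_iff₀ hδ] at hmge; nlinarith
  have hu : ∀ i : ℕ, ∃ t : ℝ, ((i : ℝ) + 1) * (δ / 2) < t ∧ t < ((i : ℝ) + 2) * (δ / 2) ∧
      {ω | t < X ω} ∈ AgreeRing 𝒜 l := by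
    intro i
    have hi : (0:ℝ) ≤ (i:ℝ) := Nat.cast_nonneg i
    exact hdense _ _ (by positivity) (by nlinarith)
  choose u hu1 hu2 hu3 using hu
  have humono : ∀ i j : ℕ, i ≤ j → u i ≤ u j := by
    intro i j hij
    rcases eq_or_lt_of_le hij with rfl | h
    · exact le_rfl
    · refine le_of_lt (lt_trans (hu2 i) (lt_of_le_of_lt ?_ (hu1 j)))
      have : (i : ℝ) + 1 ≤ (j : ℝ) := by exact_mod_cast h
      nlinarith
  have hεm : (0 : ℝ≥0∞) < ε / 2 / m :=
    ENNReal.div_pos (ENNReal.half_pos hε.ne').ne' (ENNReal.natCast_ne_top m)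
  have hEB : ∀ i : ℕ, ∃ B, B ∈ 𝒜 ∧ B ⊆ {ω | u i < X ω} ∧
      outer 𝒜 l ({ω | u i < X ω} \ B) < ε / 2 / m := by
    intro i
    obtain ⟨B, h1, h2, h3⟩ := approx hl (hu3 i) hεm
    exact ⟨B, h1, h2, h3⟩
  choose B hB1 hB2 hB3 using hEB
  set v : ℕ → ℝ := fun i => if i = 0 then 0 else u (i - 1) with hvdef
  set f : Ω → ℝ :=
    fun ω => ∑ i ∈ Finset.range m, (v (i+1) - v i) * ((B i).indicator (fun _ => (1:ℝ)) ω)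
    with hfdef
  refine ⟨f, isSimple_sum _ _ _ (fun i _ => hB1 i), ?_⟩
  set G : Set Ω := {ω | X ω ∉ K} ∪ ⋃ i ∈ Finset.range m, ({ω | u i < X ω} \ B i) with hGdef
  have hsubset : {ω | δ ≤ |f ω - X ω|} ⊆ G := by
    intro ω hω
    by_contra hG
    have hωK : X ω ∈ K := by
      by_contra h; exact hG (Or.inl h)
    have hωB : ∀ i, i < m → ω ∉ ({ω | u i < X ω} \ B i) := fun i hi hmem =>
      hG (Or.inr (Set.mem_biUnion (Finset.mem_range.mpr hi) hmem))
    have hind : ∀ i, i < m → (ω ∈ B i ↔ u i < X ω) := by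
      intro i hi
      constructor
      · intro h; exact hB2 i h
      · intro h
        by_contra hB
        exact (hωB i hi) ⟨h, hB⟩
    -- X ω ≤ M'
    have hXM : X ω ≤ M' := by
      by_contra h
      push_neg at h
      exact (hnotK ω h) hωK
    -- the top level is not exceeded
    have hPnot : ¬ u (m - 1) < X ω := by
      intro h
      have h1 : ((m:ℝ) - 1 + 1) * (δ / 2) < u (m - 1) := by
        have := hu1 (m - 1)
        have hc : ((m - 1 : ℕ) : ℝ) = (m : ℝ) - 1 := by
          have : (1:ℕ) ≤ m := hm1
          push_cast [Nat.cast_sub this]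
          ring
        rwa [hc] at this
      nlinarith
    have hex : ∃ i, ¬ u i < X ω := ⟨m - 1, hPnot⟩
    set k := Nat.find hex with hkdef
    have hknot : ¬ u k < X ω := Nat.find_spec hex
    have hklt : ∀ i, i < k → u i < X ω := fun i hi =>
      not_not.mp (Nat.find_min hex hi)
    have hkm : k < m := lt_of_le_of_lt (Nat.find_min' _ hPnot) (by omega)
    -- compute f ω
    have hfval : f ω = v k := by
      have h1 : ∀ i ∈ Finset.range m,
          (v (i+1) - v i) * ((B i).indicator (fun _ => (1:ℝ)) ω)
            = if i < k then v (i+1) - v i else 0 := by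
        intro i hi
        have him := Finset.mem_range.mp hi
        by_cases hik : i < k
        · have hP : u i < X ω := hklt i hik
          have : ω ∈ B i := (hind i him).mpr hP
          simp [hik, Set.indicator_of_mem this]
        · have hP : ¬ u i < X ω := by
            intro h
            exact hknot (lt_of_le_of_lt (humono k i (by omega)) h)
          have : ω ∉ B i := fun h => hP ((hind i him).mp h)
          simp [hik, Set.indicator_of_notMem this]
      rw [hfdef]
      simp only []
      rw [Finset.sum_congr rfl h1]
      have h2 : ∑ i ∈ Finset.range m, (if i < k then v (i+1) - v i else 0)
          = ∑ i ∈ Finset.range k, (v (i+1) - v i) := by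
        rw [← Finset.sum_subset (Finset.range_subset_range.mpr hkm.le)
          (fun x _ hxk => by simp [Finset.mem_range.not.mp hxk])]
        exact Finset.sum_congr rfl fun i hi => if_pos (Finset.mem_range.mp hi)
      rw [h2, Finset.sum_range_sub v k]
      simp [hvdef]
    -- contradiction with hω
    have hωmem : δ ≤ |f ω - X ω| := hω
    rw [hfval] at hωmem
    rcases Nat.eq_zero_or_pos k with hk0 | hkpos
    · rw [hk0] at hωmem hknot
      have hu0 : X ω ≤ u 0 := not_lt.mp hknot
      have hu0' : u 0 < δ := by have := hu2 0; nlinarith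
      have hX0 := hX ω
      have hv0 : v 0 = 0 := by simp [hvdef]
      have : |v 0 - X ω| < δ := by
        rw [hv0, zero_sub, abs_neg, abs_of_nonneg hX0]
        linarith
      linarith
    · obtain ⟨j, hj⟩ : ∃ j, k = j + 1 := ⟨k - 1, by omega⟩
      rw [hj] at hωmem hknot
      have hvk : v (j + 1) = u j := by simp [hvdef]
      have hjlt : u j < X ω := hklt j (by omega)

      have hjge : X ω ≤ u (j + 1) := not_lt.mp hknot
      have hgap : u (j + 1) - u j < δ := by
        have h1 := hu2 (j + 1)
        have h2 := hu1 j
        push_cast at h1 h2 ⊢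
        nlinarith
      have : |v (j + 1) - X ω| < δ := by
        rw [hvk, abs_sub_comm, abs_of_nonneg (by linarith)]
        linarith
      linarith
  calc outer 𝒜 l {ω | δ ≤ |f ω - X ω|} ≤ outer 𝒜 l G := outer_mono hsubset
    _ ≤ outer 𝒜 l {ω | X ω ∉ K}
        + outer 𝒜 l (⋃ i ∈ Finset.range m, ({ω | u i < X ω} \ B i)) :=
      outer_union_le hl _ _
    _ ≤ outer 𝒜 l {ω | X ω ∉ K}
        + ∑ i ∈ Finset.range m, outer 𝒜 l ({ω | u i < X ω} \ B i) :=
      add_le_add le_rfl (outer_biUnion_le hl _ _)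
    _ ≤ ε / 2 + ∑ _i ∈ Finset.range m, (ε / 2 / m) :=
      add_le_add hKout.le (Finset.sum_le_sum fun i _ => (hB3 i).le)
    _ = ε / 2 + m * (ε / 2 / m) := by
      rw [Finset.sum_const, Finset.card_range, nsmul_eq_mul]
    _ = ε / 2 + ε / 2 := by
      rw [ENNReal.mul_div_cancel (Nat.cast_ne_zero.mpr (by omega))
        (ENNReal.natCast_ne_top m)]
    _ = ε := ENNReal.add_halves ε

end FA

/-- if `X ≥ 0` is `l`-tight and `{t > 0 : {X > t} ∈ 𝒜(l)}` is dense in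
`(0, ∞)`, then `X` is `l`-measurable. -/
theorem stmt2 {Ω : Type*} (𝒜 : Set (Set Ω)) (l : Set Ω → ℝ)
    (hl : FAMeasure 𝒜 l) (X : Ω → ℝ) (hX : ∀ ω, 0 ≤ X ω)
    (htight : ∀ ε : ℝ≥0∞, 0 < ε → ∃ K : Set ℝ, IsCompact K ∧
      outer 𝒜 l {ω | X ω ∉ K} < ε)
    (hdense : ∀ a b : ℝ, 0 < a → a < b →
      ∃ t : ℝ, a < t ∧ t < b ∧ {ω | t < X ω} ∈ AgreeRing 𝒜 l) :
    FAMeasurable 𝒜 l X := by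
  have hstep : ∀ n : ℕ, ∃ f : Ω → ℝ, IsSimple 𝒜 f ∧
      outer 𝒜 l {ω | 1 / ((n:ℝ) + 1) ≤ |f ω - X ω|} ≤ ENNReal.ofReal (1 / ((n:ℝ) + 1)) :=
    fun n => FA.step hl X hX htight hdense (by positivity)
  choose g hg1 hg2 using hstep
  refine ⟨g, hg1, fun c hc => ?_⟩
  have hten : Tendsto (fun n : ℕ => ENNReal.ofReal (1 / ((n:ℝ) + 1))) atTop (nhds 0) := by
    rw [← ENNReal.ofReal_zero]
    exact (ENNReal.continuous_ofReal.tendsto 0).comp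
      tendsto_one_div_add_atTop_nhds_zero_nat
  refine tendsto_of_tendsto_of_tendsto_of_le_of_le' tendsto_const_nhds hten
    (Filter.Eventually.of_forall fun n => zero_le) ?_
  obtain ⟨N, hN⟩ := exists_nat_one_div_lt hc
  filter_upwards [eventually_ge_atTop N] with n hn
  refine le_trans (outer_mono ?_) (hg2 n)
  intro ω hω
  have h1 : 1 / ((n:ℝ) + 1) ≤ 1 / ((N:ℝ) + 1) := by
    apply one_div_le_one_div_of_le (by positivity)
    have : (N:ℝ) ≤ (n:ℝ) := by exact_mod_cast hn
    linarith
  have h2 : c < |g n ω - X ω| := hω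
  simp only [Set.mem_setOf_eq]
  linarith
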